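/- A finite word w is rich if and only if for every nonempty suffix position, appending the next letter creates a new palindrome; equivalently, w is rich if and only if for every prefix p of w of positive length, the longest palindromic suffix of p is unioccurrent in p. -/

import Mathlib

open List

variable {A : Type*}

/-- All factors (contiguous subwords) of a word, as a list. -/
def Factors (w : List A) : List (List A) := w.tails.flatMap List.inits

/-- The set of distinct palindromic factors of `w` (including the empty word). -/
def palFactors [DecidableEq A] (w : List A) : Finset (List A) :=
  ((Factors w).filter (fun u => decide (u.reverse = u))).toFinset

/-- A word is rich if it has exactly `|w| + 1` distinct palindromic factors. -/
def IsRich [DecidableEq A] (w : List A) : Prop :=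
  (palFactors w).card = w.length + 1

/-- The defect of a finite word. -/
def defect [DecidableEq A] (w : List A) : ℕ :=
  w.length + 1 - (palFactors w).card

/-- `u` is a (finite) factor of the infinite word `z`. -/
def FactorOfInf (u : List A) (z : ℕ → A) : Prop :=
  ∃ i, u = (List.range u.length).map (fun k => z (i + k))

/-- An infinite word is rich if all of its finite factors are rich. -/
def InfRich [DecidableEq A] (z : ℕ → A) : Prop :=
  ∀ u : List A, FactorOfInf u z → IsRich u

/-- The longest palindromic suffix of `w`. -/
def lps [DecidableEq A] (w : List A) : List A :=
  (w.tails.find? (fun u => decide (u.reverse = u))).getD []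

/-- The number of occurrences of `u` as a factor of `w` (counted by position). -/
def occCount [DecidableEq A] (u w : List A) : ℕ :=
  w.tails.countP (fun t => decide (u <+: t))

/-- The periodic infinite word `u^∞`. -/
def periodicWord (u : List A) (hu : u ≠ []) : ℕ → A :=
  fun i => u.get ⟨i % u.length, Nat.mod_lt _ (List.length_pos_iff.mpr hu)⟩

lemma mem_Factors {u w : List A} : u ∈ Factors w ↔ u <:+: w := by
  simp [Factors, List.mem_flatMap, mem_tails, mem_inits, infix_iff_prefix_suffix]
  tauto

lemma mem_palFactors [DecidableEq A] {u w : List A} :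
    u ∈ palFactors w ↔ u <:+: w ∧ u.reverse = u := by
  simp [palFactors, mem_Factors]

-- tails nodup
lemma nodup_tails (w : List A) : w.tails.Nodup := by
  induction w with
  | nil => simp
  | cons a l ih =>
    rw [tails_cons]
    refine List.nodup_cons.mpr ⟨?_, ih⟩
    intro h
    have := (mem_tails _ _).mp h
    have := this.length_le
    simp at this

lemma lps_nil [DecidableEq A] : lps ([] : List A) = [] := by simp [lps]

lemma lps_cons [DecidableEq A] (a : A) (l : List A) :
    lps (a :: l) = if (a :: l).reverse = a :: l then a :: l else lps l := by
  by_cases h : (a :: l).reverse = a :: l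
  · rw [lps, tails_cons, List.find?_cons, decide_eq_true h, if_pos h]
    rfl
  · rw [lps, tails_cons, List.find?_cons, decide_eq_false h, if_neg h]
    rfl

lemma lps_suffix [DecidableEq A] (w : List A) : lps w <:+ w := by
  induction w with
  | nil => simp [lps_nil]
  | cons a l ih =>
    rw [lps_cons]
    split_ifs with h
    · exact suffix_rfl
    · exact ih.trans (suffix_cons a l)

lemma lps_palindrome [DecidableEq A] (w : List A) : (lps w).reverse = lps w := by
  induction w with
  | nil => simp [lps_nil]
  | cons a l ih =>
    rw [lps_cons]
    split_ifs with h
    · exact h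
    · exact ih

lemma suffix_lps_of_palindrome_suffix [DecidableEq A] {u w : List A}
    (hs : u <:+ w) (hp : u.reverse = u) : u <:+ lps w := by
  induction w with
  | nil => rw [lps_nil]; exact hs
  | cons a l ih =>
    rw [lps_cons]
    split_ifs with h
    · exact hs
    · rcases suffix_cons_iff.mp hs with rfl | hs'
      · exact absurd hp h
      · exact ih hs'

lemma infix_dropLast {u q : List A} {a : A} {s t : List A} (ht : t ≠ [])
    (h : s ++ u ++ t = q ++ [a]) : u <:+: q := by
  rcases List.eq_nil_or_concat t with rfl | ⟨t', b, rfl⟩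
  · exact absurd rfl ht
  · have h' : (s ++ u ++ t') ++ [b] = q ++ [a] := by
      simpa [List.append_assoc] using h
    have := (List.append_inj' h' rfl).1
    exact ⟨s, t', by simpa [List.append_assoc] using this⟩

lemma infix_concat_iff {u q : List A} {a : A} :
    u <:+: q ++ [a] ↔ u <:+: q ∨ u <:+ q ++ [a] := by
  constructor
  · rintro ⟨s, t, h⟩
    rcases eq_or_ne t [] with rfl | ht
    · right; exact ⟨s, by simpa using h⟩
    · left; exact infix_dropLast ht h
  · rintro (h | h)
    · exact h.trans (List.prefix_append q [a]).isInfix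
    · exact h.isInfix

/-- A palindromic suffix other than `lps p` occurs as an infix of the word with last letter
removed. -/
lemma palindromic_suffix_infix_init [DecidableEq A] {u q : List A} {a : A}
    (hs : u <:+ q ++ [a]) (hp : u.reverse = u) (hne : u ≠ lps (q ++ [a])) :
    u <:+: q := by
  have hlps : u <:+ lps (q ++ [a]) := suffix_lps_of_palindrome_suffix hs hp
  -- u is a proper suffix of lps, hence (palindromes) a proper prefix of lps
  have hpre : u <+: lps (q ++ [a]) := by
    rw [← hp, ← lps_palindrome (q ++ [a]), reverse_prefix]
    exact hlps
  obtain ⟨t, ht⟩ := hpre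
  obtain ⟨s, hsfx⟩ := lps_suffix (q ++ [a])
  have htne : t ≠ [] := by
    rintro rfl
    exact hne (by simpa using ht)
  exact infix_dropLast (s := s) (a := a) htne (by rw [List.append_assoc, ht, hsfx])

lemma palFactors_subset [DecidableEq A] (q : List A) (a : A) :
    palFactors q ⊆ palFactors (q ++ [a]) := by
  intro u hu
  rw [mem_palFactors] at hu ⊢
  exact ⟨hu.1.trans (List.prefix_append q [a]).isInfix, hu.2⟩

lemma lps_mem_palFactors [DecidableEq A] (p : List A) : lps p ∈ palFactors p := by
  rw [mem_palFactors]
  exact ⟨(lps_suffix p).isInfix, lps_palindrome p⟩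

lemma palFactors_concat_subset [DecidableEq A] (q : List A) (a : A) :
    palFactors (q ++ [a]) ⊆ insert (lps (q ++ [a])) (palFactors q) := by
  intro u hu
  rw [mem_palFactors] at hu
  obtain ⟨hinf, hp⟩ := hu
  rcases eq_or_ne u (lps (q ++ [a])) with rfl | hne
  · exact Finset.mem_insert_self _ _
  · refine Finset.mem_insert_of_mem (mem_palFactors.mpr ⟨?_, hp⟩)
    rcases _root_.infix_concat_iff.mp hinf with h | h
    · exact h
    · exact palindromic_suffix_infix_init h hp hne

lemma palFactors_concat_card [DecidableEq A] (q : List A) (a : A) :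
    (palFactors (q ++ [a])).card =
      (palFactors q).card + (if lps (q ++ [a]) ∈ palFactors q then 0 else 1) := by
  have heq : palFactors (q ++ [a]) = insert (lps (q ++ [a])) (palFactors q) := by
    apply Finset.Subset.antisymm (palFactors_concat_subset q a)
    intro u hu
    rcases Finset.mem_insert.mp hu with rfl | hu
    · exact lps_mem_palFactors _
    · exact palFactors_subset q a hu
  rw [heq]
  split_ifs with h
  · rw [Finset.insert_eq_self.mpr h, Nat.add_zero]
  · rw [Finset.card_insert_of_notMem h]

lemma two_le_length_of_nodup [DecidableEq A] {l : List (List A)} {x y : List A}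
    (hx : x ∈ l) (hy : y ∈ l) (hxy : x ≠ y) : 2 ≤ l.length := by
  calc 2 = ({x, y} : Finset (List A)).card := (Finset.card_pair hxy).symm
    _ ≤ l.toFinset.card := by
        apply Finset.card_le_card
        intro z hz
        simp only [Finset.mem_insert, Finset.mem_singleton] at hz
        rcases hz with rfl | rfl <;> simp [hx, hy]
    _ ≤ l.length := l.toFinset_card_le

lemma length_eq_one_of_unique {l : List (List A)} (hnd : l.Nodup) {u : List A}
    (hu : u ∈ l) (hall : ∀ x ∈ l, x = u) : l.length = 1 := by
  match l, hnd, hu with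
  | [x], _, _ => rfl
  | x :: y :: r, hnd, _ =>
    have hx := hall x (by simp)
    have hy := hall y (by simp)
    rw [List.nodup_cons] at hnd
    exact absurd (by rw [hx, ← hy]; exact mem_cons_self) hnd.1

lemma occCount_concat_eq_one_iff [DecidableEq A] {u q : List A} {a : A}
    (hs : u <:+ q ++ [a]) : occCount u (q ++ [a]) = 1 ↔ ¬ u <:+: q := by
  set F := (q ++ [a]).tails.filter (fun t => decide (u <+: t)) with hF
  have hnd : F.Nodup := (List.filter_sublist).nodup (nodup_tails _)
  have hu0 : u ∈ F := by
    rw [hF, List.mem_filter]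
    exact ⟨(mem_tails _ _).mpr hs, by simp⟩
  have hocc : occCount u (q ++ [a]) = F.length := countP_eq_length_filter
  rw [hocc]
  constructor
  · intro h1 hinf
    obtain ⟨t', ht'p, ht's⟩ := infix_iff_prefix_suffix.mp hinf
    have ht1 : t' ++ [a] ∈ F := by
      rw [hF, List.mem_filter]
      refine ⟨(mem_tails _ _).mpr ?_, by simp [ht'p.trans (t'.prefix_append [a])]⟩
      obtain ⟨s, hsr⟩ := ht's
      exact ⟨s, by rw [← List.append_assoc, hsr]⟩
    have hne : t' ++ [a] ≠ u := by
      intro h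
      have h1 := ht'p.length_le
      have h2 : (t' ++ [a]).length = u.length := by rw [h]
      simp at h2
      omega
    have := two_le_length_of_nodup ht1 hu0 hne
    omega
  · intro hinf
    apply length_eq_one_of_unique hnd hu0
    intro t htF
    rw [hF, List.mem_filter] at htF
    obtain ⟨htails, hpre⟩ := htF
    have hpre : u <+: t := by simpa using hpre
    have htsfx : t <:+ q ++ [a] := (mem_tails _ _).mp htails
    by_contra hne
    obtain ⟨r, hr⟩ := hpre
    obtain ⟨s, hsr⟩ := htsfx
    have hrne : r ≠ [] := by
      rintro rfl
      exact hne (by simpa using hr.symm)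
    exact hinf (infix_dropLast hrne (by rw [List.append_assoc, hr, hsr]))

lemma palFactors_nil [DecidableEq A] : palFactors ([] : List A) = {[]} := by
  ext u
  rw [mem_palFactors]
  simp only [Finset.mem_singleton]
  constructor
  · rintro ⟨h, -⟩
    exact List.sublist_nil.mp h.sublist
  · rintro rfl
    exact ⟨infix_rfl, rfl⟩

lemma palFactors_concat_card' [DecidableEq A] (q : List A) (a : A) :
    (palFactors (q ++ [a])).card =
      (palFactors q).card +
        (if occCount (lps (q ++ [a])) (q ++ [a]) = 1 then 1 else 0) := by
  rw [palFactors_concat_card]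
  have hiff := occCount_concat_eq_one_iff (u := lps (q ++ [a])) (a := a) (lps_suffix (q ++ [a]))
  by_cases h : lps (q ++ [a]) <:+: q
  · rw [if_pos (mem_palFactors.mpr ⟨h, lps_palindrome _⟩),
      if_neg (fun hc => (hiff.mp hc) h)]
  · rw [if_neg (fun hm => h (mem_palFactors.mp hm).1), if_pos (hiff.mpr h)]

lemma card_palFactors_le [DecidableEq A] (w : List A) :
    (palFactors w).card ≤ w.length + 1 := by
  induction w using List.reverseRecOn with
  | nil => rw [palFactors_nil]; simp
  | append_singleton q a ih =>
    rw [palFactors_concat_card']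
    simp only [List.length_append, List.length_singleton]
    split_ifs <;> omega


theorem rich_iff_lps_unioccurrent_prefixes [DecidableEq A] (w : List A) :
    IsRich w ↔ ∀ p : List A, p <+: w → p ≠ [] → occCount (lps p) p = 1 := by
  induction w using List.reverseRecOn with
  | nil =>
    constructor
    · intro _ p hp hne
      rw [List.prefix_nil] at hp
      exact absurd hp hne
    · intro _
      show (palFactors ([] : List A)).card = 0 + 1
      rw [palFactors_nil, Finset.card_singleton]
  | append_singleton q a ih =>
    have hstep := palFactors_concat_card' q a
    have hbound := card_palFactors_le q
    constructor
    · intro h p hp hne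
      have h' : (palFactors (q ++ [a])).card = q.length + 1 + 1 := by
        have h2 : (palFactors (q ++ [a])).card = (q ++ [a]).length + 1 := h
        simpa using h2
      rw [hstep] at h'
      have hocc : occCount (lps (q ++ [a])) (q ++ [a]) = 1 := by
        by_contra hc
        rw [if_neg hc] at h'
        omega
      rcases prefix_concat_iff.mp hp with rfl | hp'
      · exact hocc
      · have hrich : IsRich q := by
          rw [if_pos hocc] at h'
          show (palFactors q).card = q.length + 1
          omega
        exact ih.mp hrich p hp' hne
    · intro h
      have hrich : IsRich q := by
        apply ih.mpr
        intro p hp hne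
        exact h p (hp.trans (q.prefix_append [a])) hne
      have hocc : occCount (lps (q ++ [a])) (q ++ [a]) = 1 :=
        h (q ++ [a]) prefix_rfl (by simp)
      show (palFactors (q ++ [a])).card = (q ++ [a]).length + 1
      rw [hstep, if_pos hocc]
      have : (palFactors q).card = q.length + 1 := hrich
      simp [this]
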